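/- arXiv:2209.02170 — 8 statements merged into one kernel-verified Lean document; each statement's English description precedes it below -/
import Mathlib

section
/- Let p be a prime, k a positive integer with p-adic valuation v. For any integers i₁, i₂ > 0 with k ≥ 2, there exists a natural number r ≥ 0 such that i₁ + i₂ ≥ p^r + 1 and the p-adic valuation of the multinomial coefficient (k + i₁ + i₂ - 2)! / (i₁! · i₂! · (k-2)!) is at least v - r. -/
open Finset

private lemma aux_mod_sub_two (q k : ℕ) (hq : 2 ≤ q) (hk : 2 ≤ k) (hdvd : q ∣ k) :
    (k - 2) % q = q - 2 := by
  obtain ⟨m, rfl⟩ := hdvd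
  rcases m with _ | s
  · simp at hk
  · have h2 : q * (s + 1) = q * s + q := by ring
    have h1 : q * (s + 1) - 2 = q * s + (q - 2) := by
      set A := q * s with hA
      set B := q * (s + 1) with hB
      omega
    rw [h1, Nat.mul_add_mod, Nat.mod_eq_of_lt (by omega)]

/-- For a prime `p` and `k ≥ 2` with `v = v_p(k)`, for any `i₁, i₂ > 0` there exists
`r ∈ ℕ` with `i₁ + i₂ ≥ p^r + 1` and `v_p((k+i₁+i₂-2)!/(i₁!·i₂!·(k-2)!)) ≥ v - r`. -/
theorem multinomial_valuation_lower_bound (p : ℕ) (hp : p.Prime) (k : ℕ) (hk : 2 ≤ k)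
    (v : ℕ) (hv : v = padicValNat p k) (i₁ i₂ : ℕ) (hi₁ : 0 < i₁) (hi₂ : 0 < i₂) :
    ∃ r : ℕ, p ^ r + 1 ≤ i₁ + i₂ ∧
      v - r ≤ padicValNat p
        ((k + i₁ + i₂ - 2).factorial / (i₁.factorial * i₂.factorial * (k - 2).factorial)) := by
  haveI : Fact p.Prime := ⟨hp⟩
  have hp2 : 2 ≤ p := hp.two_le
  have hn2 : 2 ≤ i₁ + i₂ := by omega
  set r := Nat.log p (i₁ + i₂ - 1) with hr
  have hrle : p ^ r ≤ i₁ + i₂ - 1 := Nat.pow_log_le_self p (by omega)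
  refine ⟨r, by omega, ?_⟩
  rcases le_or_gt v r with h | hrv
  · simp [Nat.sub_eq_zero_of_le h]
  have hNeq : k + i₁ + i₂ - 2 = i₁ + i₂ + (k - 2) := by omega
  rw [hNeq]
  set N := i₁ + i₂ + (k - 2) with hN
  have hdvd : i₁.factorial * i₂.factorial * (k - 2).factorial ∣ N.factorial := by
    calc i₁.factorial * i₂.factorial * (k - 2).factorial
        ∣ (i₁ + i₂).factorial * (k - 2).factorial :=
          mul_dvd_mul_right (Nat.factorial_mul_factorial_dvd_factorial_add i₁ i₂) _
      _ ∣ N.factorial := Nat.factorial_mul_factorial_dvd_factorial_add _ _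
  rw [padicValNat.div_of_dvd hdvd,
    padicValNat.mul (by positivity) (Nat.factorial_ne_zero _),
    padicValNat.mul (Nat.factorial_ne_zero _) (Nat.factorial_ne_zero _)]
  set b := N + 1 with hb
  have hlog : ∀ m : ℕ, m ≤ N → Nat.log p m < b := fun m hm =>
    lt_of_le_of_lt (le_trans (Nat.log_le_self p m) hm) (by omega)
  rw [padicValNat_factorial (p := p) (hlog N le_rfl),
    padicValNat_factorial (p := p) (hlog i₁ (by omega)),
    padicValNat_factorial (p := p) (hlog i₂ (by omega)),
    padicValNat_factorial (p := p) (hlog (k - 2) (by omega))]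
  -- basic facts
  have hpvk : p ^ v ∣ k := hv ▸ pow_padicValNat_dvd
  have hvk : v ≤ k := le_trans (le_of_lt (Nat.lt_pow_self (n := v) (by omega : 1 < p))) (Nat.le_of_dvd (by omega) hpvk)
  have hsplit : ∀ i ∈ Finset.Ico 1 b,
      (i₁ / p ^ i + i₂ / p ^ i + (k - 2) / p ^ i)
        + (if r + 1 ≤ i ∧ i ≤ v then 1 else 0) ≤ N / p ^ i := by
    intro i _
    by_cases hP : r + 1 ≤ i ∧ i ≤ v
    · simp only [hP, and_self, if_true]
      obtain ⟨hP1, hP2⟩ := hP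
      set q := p ^ i with hq
      have hq2 : 2 ≤ q := le_trans hp2 (Nat.le_self_pow (by omega) p)
      have hi1q : i₁ < q := by
        have h1 : i₁ + i₂ - 1 < p ^ (r + 1) := Nat.lt_pow_succ_log_self (by omega) _
        have h2 : p ^ (r + 1) ≤ q := Nat.pow_le_pow_right (by omega) hP1
        omega
      have hi2q : i₂ < q := by
        have h1 : i₁ + i₂ - 1 < p ^ (r + 1) := Nat.lt_pow_succ_log_self (by omega) _
        have h2 : p ^ (r + 1) ≤ q := Nat.pow_le_pow_right (by omega) hP1
        omega
      have hqk : q ∣ k := dvd_trans (pow_dvd_pow p hP2) hpvk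
      have hmod : (k - 2) % q = q - 2 := aux_mod_sub_two q k hq2 hk hqk
      rw [Nat.div_eq_of_lt hi1q, Nat.div_eq_of_lt hi2q]
      rw [Nat.le_div_iff_mul_le (by omega), add_mul, one_mul, zero_add, zero_add, mul_comm]
      have e : q * ((k - 2) / q) + (k - 2) % q = k - 2 := Nat.div_add_mod _ _
      rw [hmod] at e
      set A := q * ((k - 2) / q) with hA
      omega
    · simp only [hP, if_false, add_zero]
      calc i₁ / p ^ i + i₂ / p ^ i + (k - 2) / p ^ i
          ≤ (i₁ + i₂) / p ^ i + (k - 2) / p ^ i :=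
            Nat.add_le_add_right (Nat.add_div_le_add_div _ _ _) _
        _ ≤ N / p ^ i := Nat.add_div_le_add_div _ _ _
  have hsum := Finset.sum_le_sum hsplit
  rw [Finset.sum_add_distrib, Finset.sum_add_distrib, Finset.sum_add_distrib] at hsum
  have hcard : ∑ i ∈ Finset.Ico 1 b, (if r + 1 ≤ i ∧ i ≤ v then 1 else 0) = v - r := by
    rw [← Finset.sum_filter]
    have hfil : (Finset.Ico 1 b).filter (fun i => r + 1 ≤ i ∧ i ≤ v) =
        Finset.Ico (r + 1) (v + 1) := by
      ext i
      simp only [Finset.mem_filter, Finset.mem_Ico]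
      omega
    rw [hfil]
    simp [Nat.card_Ico]
  rw [hcard] at hsum
  omega
end

section
/- Let κ be a finite field, V a finite-dimensional κ-vector space, ψ: κ → ℂ^× a nontrivial additive character, and Q: V → κ a polynomial function of degree at most 2. Let B(v,w) = Q(v+w) - Q(v) - Q(w) + Q(0) be the associated bilinear form and W its kernel (the set of v with B(v,w)=0 for all w). Then |∑_{v∈V} ψ(Q(v))| equals |κ|^{(dim V + dim W)/2} if v ↦ ψ(Q(v) - Q(0)) is trivial on W, and equals 0 otherwise. -/
/-- Let `κ` be a finite field, `V` a finite-dimensional `κ`-vector space, `ψ` a nontrivial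
additive character of `κ`, and `Q : V → κ` a polynomial function of degree at most `2`
(a quadratic form plus a linear form plus a constant). Let
`B(v,w) = Q(v+w) - Q v - Q w + Q 0` and `W` its kernel. Then `|∑_v ψ(Q v)|` equals
`|κ|^{(dim V + dim W)/2}` if `v ↦ ψ(Q v - Q 0)` is trivial on `W`, and `0` otherwise. -/
theorem gauss_sum_quadratic
    (κ : Type*) [Field κ] [Fintype κ]
    (V : Type*) [AddCommGroup V] [Module κ V] [FiniteDimensional κ V] [Fintype V]
    (ψ : AddChar κ ℂ) (hψ : ψ ≠ 1)
    (Q : V → κ)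
    (hQ : ∃ (Q₂ : QuadraticForm κ V) (L : V →ₗ[κ] κ) (c : κ), ∀ v, Q v = Q₂ v + L v + c)
    (W : Set V) (hW : W = {v | ∀ w, Q (v + w) - Q v - Q w + Q 0 = 0}) :
    ((∀ v ∈ W, ψ (Q v - Q 0) = 1) →
        ‖∑ v : V, ψ (Q v)‖ =
          Real.sqrt ((Fintype.card V : ℝ) * (Nat.card W : ℝ))) ∧
    (¬ (∀ v ∈ W, ψ (Q v - Q 0) = 1) → ‖∑ v : V, ψ (Q v)‖ = 0) := by
  classical
  obtain ⟨Q₂, L, c, hQc⟩ := hQ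
  set B : LinearMap.BilinForm κ V := QuadraticMap.polarBilin Q₂ with hBdef
  have hBQ : ∀ u w : V, Q (u + w) - Q u - Q w + Q 0 = B u w := by
    intro u w
    simp only [hBdef, QuadraticMap.polarBilin_apply_apply, QuadraticMap.polar, hQc, map_add,
      map_zero, QuadraticMap.map_zero]
    ring
  -- W is the kernel of B
  have hWmem : ∀ v : V, v ∈ W ↔ B v = 0 := by
    intro v
    rw [hW]
    constructor
    · intro h
      ext w
      rw [← hBQ v w, h w]
      rfl
    · intro h w
      rw [hBQ v w, h]
      rfl
  have hWker : W = (LinearMap.ker B : Set V) := by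
    ext v; rw [hWmem v, SetLike.mem_coe, LinearMap.mem_ker]
  -- The key identity: |S|² as a double sum
  set S : ℂ := ∑ v : V, ψ (Q v) with hS
  have key : S * (starRingEnd ℂ) S =
      (Fintype.card V : ℂ) * ∑ u : V, (if u ∈ W then (ψ (Q u - Q 0) : ℂ) else 0) := by
    rw [hS, map_sum]
    have hconj : ∀ w : V, (starRingEnd ℂ) (ψ (Q w)) = ψ (-(Q w)) := by
      intro w; rw [AddChar.map_neg_eq_conj]
    simp_rw [hconj, Finset.sum_mul_sum, ← AddChar.map_add_eq_mul]
    rw [Finset.sum_comm]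
    have step1 : ∀ w : V, (∑ v : V, ψ (Q v + -(Q w))) = ∑ u : V, ψ (Q (w + u) + -(Q w)) := by
      intro w
      exact (Fintype.sum_equiv (Equiv.addLeft w) _ _ fun u => rfl).symm
    simp_rw [step1]
    have step2 : ∀ w u : V, Q (w + u) + -(Q w) = B u w + (Q u - Q 0) := by
      intro w u
      have := hBQ u w
      rw [add_comm u w] at this
      linear_combination this
    simp_rw [step2, AddChar.map_add_eq_mul]
    rw [Finset.sum_comm]
    have step3 : ∀ u : V, (∑ w : V, (ψ (B u w) : ℂ) * ψ (Q u - Q 0)) =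
        (if u ∈ W then (ψ (Q u - Q 0) : ℂ) else 0) * (Fintype.card V : ℂ) := by
      intro u
      rw [← Finset.sum_mul]
      by_cases hu : u ∈ W
      · rw [if_pos hu]
        have h0 : B u = 0 := (hWmem u).mp hu
        simp [h0, mul_comm]
      · rw [if_neg hu, zero_mul]
        have h0 : B u ≠ 0 := fun h => hu ((hWmem u).mpr h)
        have hsum : (∑ w : V, (ψ (B u w) : ℂ)) = 0 := by
          have : (ψ.compAddMonoidHom (B u).toAddMonoidHom) ≠ 1 := by
            rw [AddChar.ne_one_iff]
            obtain ⟨a, ha⟩ := AddChar.ne_one_iff.mp hψ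
            obtain ⟨w₀, hw₀⟩ : ∃ w₀, B u w₀ ≠ 0 := by
              by_contra hc
              push_neg at hc
              exact h0 (LinearMap.ext hc)
            refine ⟨(a / B u w₀) • w₀, ?_⟩
            simpa [div_mul_cancel₀ a hw₀] using ha
          have := AddChar.sum_eq_zero_of_ne_one this
          simpa using this
        rw [hsum, zero_mul]
    simp_rw [step3]
    rw [← Finset.sum_mul, mul_comm]
  -- rewrite the indicator sum as a sum over the subtype
  have hsub : (∑ u : V, (if u ∈ W then (ψ (Q u - Q 0) : ℂ) else 0)) =
      ∑ u : W, (ψ (Q (u : V) - Q 0) : ℂ) := by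
    rw [← Finset.sum_filter]
    rw [show Finset.filter (· ∈ W) Finset.univ = W.toFinset by ext; simp]
    exact (Finset.sum_set_coe (f := fun u => (ψ (Q u - Q 0) : ℂ)) (s := W)).symm
  have hcardW : (Nat.card W : ℝ) = (Fintype.card W : ℝ) := by
    rw [Nat.card_eq_fintype_card]
  constructor
  · -- trivial on W
    intro htriv
    have hsum1 : (∑ u : W, (ψ (Q (u : V) - Q 0) : ℂ)) = (Fintype.card W : ℂ) := by
      rw [Finset.sum_congr rfl fun u _ => htriv u.1 u.2]
      simp [Finset.card_univ]
    have habsR : ‖S‖ ^ 2 = (Fintype.card V : ℝ) * (Fintype.card W : ℝ) := by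
      rw [Complex.sq_norm]
      have h : (Complex.normSq S : ℂ) =
          (((Fintype.card V : ℝ) * (Fintype.card W : ℝ) : ℝ) : ℂ) := by
        rw [← Complex.mul_conj, key, hsub, hsum1]
        push_cast
        ring
      exact_mod_cast h
    rw [hcardW, ← habsR, Real.sqrt_sq (norm_nonneg S)]
  · -- nontrivial on W
    intro hntriv
    -- W as an additive subgroup
    have hWzero : Q (0 : V) - Q 0 = 0 := sub_self _
    let Wg : AddSubgroup V := (LinearMap.ker B).toAddSubgroup
    have hWg : ∀ v : V, v ∈ Wg ↔ v ∈ W := by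
      intro v
      rw [hWmem v]
      exact LinearMap.mem_ker
    let χ : AddChar Wg ℂ :=
      { toFun := fun u => ψ (Q (u : V) - Q 0)
        map_zero_eq_one' := by simp
        map_add_eq_mul' := by
          rintro ⟨u, hu⟩ ⟨u', hu'⟩
          have hB0 : B u u' = 0 := by
            have := LinearMap.mem_ker.mp hu
            rw [this]; rfl
          have hq : Q (u + u') - Q 0 = (Q u - Q 0) + (Q u' - Q 0) := by
            have := hBQ u u'
            rw [hB0] at this
            linear_combination this
          show ψ (Q (u + u') - Q 0) = ψ (Q u - Q 0) * ψ (Q u' - Q 0)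
          rw [hq, AddChar.map_add_eq_mul] }
    have hχ : χ ≠ 1 := by
      rw [AddChar.ne_one_iff]
      push_neg at hntriv
      obtain ⟨v, hv, hv1⟩ := hntriv
      exact ⟨⟨v, (hWg v).mpr hv⟩, hv1⟩
    have hzero : (∑ u : W, (ψ (Q (u : V) - Q 0) : ℂ)) = 0 := by
      have h := AddChar.sum_eq_zero_of_ne_one hχ
      have heq : (∑ u : W, (ψ (Q (u : V) - Q 0) : ℂ)) = ∑ u : Wg, χ u := by
        refine Fintype.sum_equiv (Equiv.subtypeEquiv (Equiv.refl V) fun v => ((hWg v).symm)) _ _ ?_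
        intro u; rfl
      rw [heq, h]
    have hmc : S * (starRingEnd ℂ) S = 0 := by rw [key, hsub, hzero, mul_zero]
    have hS0 : Complex.normSq S = 0 := by
      have h2 : (Complex.normSq S : ℂ) = 0 := by rw [← Complex.mul_conj, hmc]
      exact_mod_cast h2
    have hS' : S = 0 := Complex.normSq_eq_zero.mp hS0
    simp [hS']
end

section
/- Let V be a finite abelian group and φ: V → {z ∈ ℂ : |z|=1} a function such that, defining φ̃(v,w) = φ(v+w)·conj(φ(v))·conj(φ(w))·φ(0), the map w ↦ φ̃(v,w) is a group homomorphism V → ℂ^× for each v. Let W = {v ∈ V : φ̃(v,w)=1 for all w ∈ V}. Then |∑_{v∈V} φ(v)| = sqrt(|V|·|W|) if φ is constant on W, and |∑_{v∈V} φ(v)| = 0 otherwise. -/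
/-- Let `V` be a finite abelian group and `φ : V → ℂ` a unimodular function such that
`φ̃(v,w) = φ(v+w)·conj(φ v)·conj(φ w)·φ 0` is a homomorphism in `w` for each `v`. Let
`W = {v : φ̃(v,w) = 1 for all w}`. Then `|∑ φ| = √(|V|·|W|)` if `φ` is constant on `W`,
and `|∑ φ| = 0` otherwise. -/
theorem gauss_sum_general
    (V : Type*) [AddCommGroup V] [Fintype V] (φ : V → ℂ)
    (hφ : ∀ v, ‖φ v‖ = 1)
    (φt : V → V → ℂ)
    (hφt : ∀ v w, φt v w = φ (v + w) * (starRingEnd ℂ) (φ v) * (starRingEnd ℂ) (φ w) * φ 0)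
    (hhom : ∀ v w₁ w₂, φt v (w₁ + w₂) = φt v w₁ * φt v w₂)
    (W : Set V) (hW : W = {v | ∀ w, φt v w = 1}) :
    ((∀ v ∈ W, ∀ w ∈ W, φ v = φ w) →
        ‖∑ v : V, φ v‖ = Real.sqrt ((Fintype.card V : ℝ) * (Nat.card W : ℝ))) ∧
    (¬ (∀ v ∈ W, ∀ w ∈ W, φ v = φ w) → ‖∑ v : V, φ v‖ = 0) := by
  classical
  set c := starRingEnd ℂ with hc
  have hmod : ∀ v, φ v * c (φ v) = 1 := by
    intro v
    rw [Complex.mul_conj]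
    norm_cast
    rw [← Complex.sq_norm, hφ]; norm_num
  -- symmetry
  have hsym : ∀ v w, φt v w = φt w v := by
    intro v w
    rw [hφt, hφt, add_comm]; ring
  -- 0 ∈ W
  have hW0 : (0 : V) ∈ W := by
    rw [hW]
    intro w
    rw [hφt, zero_add]
    linear_combination (c (φ 0) * φ 0) * hmod w + hmod 0
  -- φ never zero
  have hne : ∀ v, φ v ≠ 0 := by
    intro v h
    have := hφ v
    rw [h] at this
    simp at this
  have hcne : ∀ v, c (φ v) ≠ 0 := by
    intro v h
    simp only [hc, map_eq_zero] at h
    exact hne v h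
  have habs : ∀ u w, φt u w ≠ 0 := by
    intro u w
    rw [hφt]
    exact mul_ne_zero (mul_ne_zero (mul_ne_zero (hne _) (hcne _)) (hcne _)) (hne _)
  -- character sum
  have hchar : ∀ u, (∑ w : V, φt u w) =
      if u ∈ W then (Fintype.card V : ℂ) else 0 := by
    intro u
    split_ifs with hu
    · rw [hW] at hu
      simp only [Set.mem_setOf_eq] at hu
      simp [hu]
    · rw [hW] at hu
      simp only [Set.mem_setOf_eq] at hu
      push_neg at hu
      obtain ⟨w₀, hw₀⟩ := hu
      have hshift : (∑ w : V, φt u w) = ∑ w : V, φt u (w₀ + w) :=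
        Fintype.sum_equiv (Equiv.addLeft (-w₀)) _ _ (fun w => by
          rw [Equiv.coe_addLeft, add_neg_cancel_left])
      have e1 : (∑ w : V, φt u (w₀ + w)) = φt u w₀ * ∑ w : V, φt u w := by
        simp only [hhom]
        rw [← Finset.mul_sum]
      have h2 : (1 - φt u w₀) * ∑ w : V, φt u w = 0 := by
        linear_combination hshift.trans e1
      rcases mul_eq_zero.mp h2 with h | h
      · exact absurd (by linear_combination -h) hw₀
      · exact h
  set T := Finset.univ.filter (fun u => u ∈ W) with hT
  -- main identity
  have hmain : (∑ v : V, φ v) * c (∑ v : V, φ v) =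
      (Fintype.card V : ℂ) * c (φ 0) * ∑ u ∈ T, φ u := by
    rw [map_sum, Finset.sum_mul_sum]
    have key : ∀ u w : V, φ (w + u) * c (φ w) = φt u w * φ u * c (φ 0) := by
      intro u w
      have h1 := hφt u w
      rw [add_comm u w] at h1
      linear_combination (-(φ u * c (φ 0))) * h1 + (-(φ (w + u) * c (φ w))) * hmod u +
        (-(φ (w + u) * c (φ w) * φ u * c (φ u))) * hmod 0
    have step1 : ∀ w : V, (∑ v : V, φ v * c (φ w)) = ∑ u : V, φt u w * φ u * c (φ 0) := by
      intro w
      have e1 : (∑ u : V, φ (w + u) * c (φ w)) = ∑ v : V, φ v * c (φ w) :=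
        Fintype.sum_equiv (Equiv.addLeft w) _ _ (fun u => by rw [Equiv.coe_addLeft])
      rw [← e1]
      exact Finset.sum_congr rfl fun u _ => key u w
    calc (∑ v : V, ∑ w : V, φ v * c (φ w)) = ∑ w : V, ∑ v : V, φ v * c (φ w) :=
          Finset.sum_comm
      _ = ∑ w : V, ∑ u : V, φt u w * φ u * c (φ 0) := by
          exact Finset.sum_congr rfl fun w _ => step1 w
      _ = ∑ u : V, (∑ w : V, φt u w) * φ u * c (φ 0) := by
          rw [Finset.sum_comm]
          refine Finset.sum_congr rfl fun u _ => ?_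
          rw [Finset.sum_mul, Finset.sum_mul]
      _ = ∑ u : V, (if u ∈ W then (Fintype.card V : ℂ) else 0) * φ u * c (φ 0) := by
          exact Finset.sum_congr rfl fun u _ => by rw [hchar]
      _ = (Fintype.card V : ℂ) * c (φ 0) * ∑ u ∈ T, φ u := by
          rw [Finset.mul_sum, hT, Finset.sum_filter]
          refine Finset.sum_congr rfl fun u _ => ?_
          split_ifs <;> ring
  have hcardW : (Nat.card W : ℝ) = (T.card : ℝ) := by
    norm_cast
    rw [Nat.card_eq_fintype_card, hT]
    exact Fintype.card_subtype _
  constructor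
  · -- constant case
    intro hconst
    have hsumT : (∑ u ∈ T, φ u) = (T.card : ℂ) * φ 0 := by
      rw [Finset.sum_congr rfl (fun u hu => hconst u (Finset.mem_filter.mp hu).2 0 hW0)]
      rw [Finset.sum_const, nsmul_eq_mul]
    have key : (∑ v : V, φ v) * c (∑ v : V, φ v) =
        ((Fintype.card V : ℝ) * (T.card : ℝ) : ℂ) := by
      rw [hmain, hsumT]
      push_cast
      linear_combination (Fintype.card V : ℂ) * (T.card : ℂ) * hmod 0
    rw [Complex.mul_conj] at key
    have key2 : Complex.normSq (∑ v : V, φ v) = (Fintype.card V : ℝ) * (T.card : ℝ) := by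
      exact_mod_cast key
    rw [Complex.norm_def, key2, hcardW]
  · -- nonconstant case
    intro hnc
    push_neg at hnc
    obtain ⟨v, hv, w, hw, hvw⟩ := hnc
    have : φ v ≠ φ 0 ∨ φ w ≠ φ 0 := by
      by_contra h
      push_neg at h
      exact hvw (h.1.trans h.2.symm)
    obtain ⟨u₀, hu₀W, hu₀⟩ : ∃ u₀, u₀ ∈ W ∧ φ u₀ ≠ φ 0 := by
      rcases this with h | h
      · exact ⟨v, hv, h⟩
      · exact ⟨w, hw, h⟩
    -- -u₀ ∈ W
    have ht0 : ∀ u : V, φt u 0 = 1 := by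
      intro u
      have h := hhom u 0 0
      rw [add_zero] at h
      have h2 : φt u 0 * (φt u 0 - 1) = 0 := by linear_combination -h
      rcases mul_eq_zero.mp h2 with h3 | h3
      · exact absurd h3 (habs u 0)
      · linear_combination h3
    have hnegW : -u₀ ∈ W := by
      rw [hW]
      intro w'
      have h1 := hhom w' u₀ (-u₀)
      rw [add_neg_cancel, ht0] at h1
      rw [hW] at hu₀W
      have h2 : φt w' u₀ = 1 := by rw [hsym]; exact hu₀W w'
      rw [h2, one_mul] at h1
      rw [hsym]; exact h1.symm
    -- sum over T is zero
    have hmemT : ∀ u, u ∈ T ↔ u ∈ W := by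
      intro u; simp [hT]
    have haddmem : ∀ u ∈ T, u₀ + u ∈ T := by
      intro u hu
      rw [hmemT] at *
      rw [hW]
      intro w'
      rw [hsym, hhom, hsym]
      rw [hW] at hu₀W hu
      rw [hu₀W w', (by rw [hsym]; exact hu w' : φt w' u = 1), one_mul]
    have hsubmem : ∀ u ∈ T, -u₀ + u ∈ T := by
      intro u hu
      rw [hmemT] at *
      rw [hW]
      intro w'
      rw [hsym, hhom, hsym]
      rw [hW] at hnegW hu
      rw [hnegW w', (by rw [hsym]; exact hu w' : φt w' u = 1), one_mul]
    have hshift : (∑ u ∈ T, φ u) = ∑ u ∈ T, φ (u₀ + u) := by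
      refine Finset.sum_nbij' (fun u => -u₀ + u) (fun u => u₀ + u) ?_ ?_ ?_ ?_ ?_
      · exact hsubmem
      · exact haddmem
      · intro u _; simp
      · intro u _; simp
      · intro u _; simp
    have hmul : ∀ u ∈ T, φ (u₀ + u) = φ u₀ * φ u * c (φ 0) := by
      intro u hu
      rw [hW] at hu₀W
      have h1 := hu₀W u
      rw [hφt] at h1
      linear_combination (φ u₀ * φ u * c (φ 0)) * h1 -
        φ (u₀ + u) * (φ u * c (φ u)) * (φ 0 * c (φ 0)) * hmod u₀ -
        φ (u₀ + u) * (φ 0 * c (φ 0)) * hmod u - φ (u₀ + u) * hmod 0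
    have hfactor : φ u₀ * c (φ 0) * ∑ u ∈ T, φ u = ∑ u ∈ T, φ u := by
      conv_rhs => rw [hshift, Finset.sum_congr rfl hmul]
      rw [Finset.mul_sum]
      exact Finset.sum_congr rfl fun u _ => by ring
    have hne1 : φ u₀ * c (φ 0) ≠ 1 := by
      intro h
      apply hu₀
      have := hmod 0
      calc φ u₀ = φ u₀ * c (φ 0) * φ 0 - (φ 0 * c (φ 0) - 1) * φ u₀ := by ring
        _ = φ 0 := by rw [h, this]; ring
    have hzero : (∑ u ∈ T, φ u) = 0 := by
      have h2 : (1 - φ u₀ * c (φ 0)) * ∑ u ∈ T, φ u = 0 := by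
        linear_combination -hfactor
      rcases mul_eq_zero.mp h2 with h | h
      · exact absurd (by linear_combination -h) hne1
      · exact h
    have : (∑ v : V, φ v) * c (∑ v : V, φ v) = 0 := by
      rw [hmain, hzero, mul_zero]
    rw [Complex.mul_conj] at this
    have : Complex.normSq (∑ v : V, φ v) = 0 := by exact_mod_cast this
    rw [Complex.norm_def, this, Real.sqrt_zero]
end

section
/- Let κ = 𝔽_q be a finite field of odd characteristic p, ψ a nontrivial additive character of κ, k ≥ 2 an integer divisible by p, and α, β ∈ κ with β ≠ 0. Define G_k(α,β) = ∑_{δ₁,...,δ_{k-1} ∈ κ} ψ(α·∑_i δ_i + β·∑_{1≤i≤j≤k-1} δ_i δ_j). Then |G_k(α,β)| = q^{k/2} if α = 0, and G_k(α,β) = 0 if α ≠ 0. -/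
open Finset

section GaussAux
variable {κ : Type*} [Field κ] [Fintype κ] {n : ℕ}

/-- The half-sum `∑_{i ≤ j} δ_i ε_j`. -/
def gaussOffT (n : ℕ) (δ ε : Fin n → κ) : κ :=
  ∑ q ∈ univ.filter (fun q : Fin n × Fin n => q.1 ≤ q.2), δ q.1 * ε q.2

lemma gaussOffT_add_offT (δ ε : Fin n → κ) :
    gaussOffT n δ ε + gaussOffT n ε δ = (∑ i, δ i) * (∑ i, ε i) + ∑ i, δ i * ε i := by
  classical
  have hswap : gaussOffT n ε δ
      = ∑ q ∈ univ.filter (fun q : Fin n × Fin n => q.2 ≤ q.1), δ q.1 * ε q.2 := by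
    unfold gaussOffT
    refine Finset.sum_equiv (Equiv.prodComm (Fin n) (Fin n)) ?_ ?_ <;>
      simp [mul_comm]
  have hsplit : (univ.filter (fun q : Fin n × Fin n => q.2 ≤ q.1))
      = (univ.filter (fun q : Fin n × Fin n => ¬ q.1 ≤ q.2))
        ∪ (univ.filter (fun q : Fin n × Fin n => q.1 = q.2)) := by
    ext ⟨i, j⟩
    simp only [mem_filter, mem_union, mem_univ, true_and, Fin.le_def, Fin.ext_iff]
    omega
  have hdisj : Disjoint (univ.filter (fun q : Fin n × Fin n => ¬ q.1 ≤ q.2))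
      (univ.filter (fun q : Fin n × Fin n => q.1 = q.2)) := by
    simp only [Finset.disjoint_left, mem_filter, mem_univ, true_and]
    exact fun q hq hq' => hq (le_of_eq hq')
  have hdiag : ∑ q ∈ univ.filter (fun q : Fin n × Fin n => q.1 = q.2), δ q.1 * ε q.2
      = ∑ i, δ i * ε i := by
    have himg : univ.filter (fun q : Fin n × Fin n => q.1 = q.2)
        = univ.image (fun i : Fin n => (i, i)) := by
      ext ⟨i, j⟩
      simp only [mem_filter, mem_univ, true_and, mem_image, Prod.ext_iff]
      constructor
      · rintro rfl; exact ⟨i, rfl, rfl⟩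
      · rintro ⟨a, rfl, rfl⟩; rfl
    rw [himg, Finset.sum_image (by intro a _ b _ h; simpa [Prod.ext_iff] using h)]
  have huniv : ∑ q : Fin n × Fin n, δ q.1 * ε q.2 = (∑ i, δ i) * (∑ i, ε i) := by
    rw [Finset.sum_mul_sum, Fintype.sum_prod_type]
  rw [hswap, hsplit, Finset.sum_union hdisj, hdiag]
  unfold gaussOffT
  rw [← huniv, ← Finset.sum_filter_add_sum_filter_not univ (fun q : Fin n × Fin n => q.1 ≤ q.2)]
  ring

lemma gaussOffT_add (δ η : Fin n → κ) :
    gaussOffT n (δ + η) (δ + η) = gaussOffT n δ δ + gaussOffT n η η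
      + ((∑ i, δ i) * (∑ i, η i) + ∑ i, δ i * η i) := by
  rw [← gaussOffT_add_offT]
  unfold gaussOffT
  simp only [Pi.add_apply, ← Finset.sum_add_distrib]
  exact Finset.sum_congr rfl fun q _ => by ring

lemma addchar_map_sum {ι : Type*} (ψ : AddChar κ ℂ) (s : Finset ι) (f : ι → κ) :
    ψ (∑ i ∈ s, f i) = ∏ i ∈ s, ψ (f i) := by
  classical
  induction s using Finset.cons_induction with
  | empty => simp
  | cons a s h ih => rw [Finset.sum_cons, Finset.prod_cons, AddChar.map_add_eq_mul, ih]

end GaussAux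



open Finset in
/-- For a finite field `κ` of odd characteristic `p` with `p ∣ k`, a nontrivial additive
character `ψ` and `β ≠ 0`, the Gauss sum `G_k(α,β)` has absolute value `q^{k/2}` when `α = 0`
and vanishes when `α ≠ 0`. -/
theorem gauss_sum_of_dvd_odd_char
    (κ : Type*) [Field κ] [Fintype κ] (p : ℕ) [CharP κ p] (hp : p.Prime) (hodd : p ≠ 2)
    (ψ : AddChar κ ℂ) (hψ : ψ ≠ 1) (k : ℕ) (hk : 2 ≤ k) (hpk : p ∣ k)
    (α β : κ) (hβ : β ≠ 0) :
    (α = 0 → ‖(∑ δ : Fin (k - 1) → κ,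
        ψ (α * ∑ i, δ i +
          β * ∑ q ∈ univ.filter (fun q : Fin (k-1) × Fin (k-1) => q.1 ≤ q.2),
              δ q.1 * δ q.2))‖ = Real.sqrt ((Fintype.card κ : ℝ) ^ k)) ∧
    (α ≠ 0 → (∑ δ : Fin (k - 1) → κ,
        ψ (α * ∑ i, δ i +
          β * ∑ q ∈ univ.filter (fun q : Fin (k-1) × Fin (k-1) => q.1 ≤ q.2),
              δ q.1 * δ q.2)) = 0) := by
  classical
  have hk1 : k - 1 + 1 = k := by omega
  set n := k - 1 with hndef
  have hn1 : 0 < n := by omega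
  have i0 : Fin n := ⟨0, hn1⟩
  have hkz : ((k : ℕ) : κ) = 0 := (CharP.cast_eq_zero_iff κ p k).mpr hpk
  have hnκ : ((n : ℕ) : κ) = -1 := by
    have h : ((n : ℕ) : κ) + 1 = 0 := by
      rw [← Nat.cast_one, ← Nat.cast_add, hk1, hkz]
    linear_combination h
  have h2 : (2 : κ) ≠ 0 := by
    intro h
    have h2' : p ∣ 2 := (CharP.cast_eq_zero_iff κ p 2).mp (by exact_mod_cast h)
    exact hodd ((Nat.prime_dvd_prime_iff_eq hp Nat.prime_two).mp h2')
  have hprim : ψ.IsPrimitive := AddChar.IsPrimitive.of_ne_one hψ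
  have hconst : ∀ c : κ, gaussOffT n (fun _ : Fin n => c) (fun _ : Fin n => c) = 0 := by
    intro c
    have h := gaussOffT_add_offT (fun _ : Fin n => c) (fun _ : Fin n => c)
    simp only [Finset.sum_const, card_univ, Fintype.card_fin, nsmul_eq_mul, hnκ] at h
    have h2' : (2 : κ) * gaussOffT n (fun _ : Fin n => c) (fun _ : Fin n => c) = 0 := by
      rw [two_mul, h]; ring
    exact (mul_eq_zero.mp h2').resolve_left h2
  constructor
  · -- case α = 0
    intro hα0
    subst hα0
    show ‖(∑ δ : Fin n → κ, ψ (0 * ∑ i, δ i + β * gaussOffT n δ δ))‖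
        = Real.sqrt ((Fintype.card κ : ℝ) ^ k)
    simp only [zero_mul, zero_add]
    set G := ∑ δ : Fin n → κ, ψ (β * gaussOffT n δ δ) with hGdef
    have hRpos : 0 < ringChar κ := by
      rw [ringChar.eq κ p]; exact hp.pos
    have hconj : (starRingEnd ℂ) G = ∑ δ : Fin n → κ, ψ (-(β * gaussOffT n δ δ)) := by
      rw [hGdef, map_sum]
      exact Finset.sum_congr rfl fun δ _ => by
        rw [AddChar.starComp_apply hRpos, AddChar.inv_apply]
    have inner : ∀ η : Fin n → κ,
        (∑ ε : Fin n → κ, ψ (β * ((∑ i, ε i) * (∑ i, η i) + ∑ i, ε i * η i)))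
        = if (∀ i, η i = - ∑ j, η j) then ((Fintype.card κ : ℂ)) ^ n else 0 := by
      intro η
      have hlin : ∀ ε : Fin n → κ, β * ((∑ i, ε i) * (∑ i, η i) + ∑ i, ε i * η i)
          = ∑ i, ε i * (β * ((∑ j, η j) + η i)) := by
        intro ε
        rw [Finset.sum_mul, ← Finset.sum_add_distrib, Finset.mul_sum]
        exact Finset.sum_congr rfl fun i _ => by ring
      calc (∑ ε : Fin n → κ, ψ (β * ((∑ i, ε i) * (∑ i, η i) + ∑ i, ε i * η i)))
          = ∑ ε : Fin n → κ, ∏ i, ψ (ε i * (β * ((∑ j, η j) + η i))) := by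
            refine Finset.sum_congr rfl fun ε _ => ?_
            rw [hlin, addchar_map_sum]
        _ = ∏ i, ∑ x : κ, ψ (x * (β * ((∑ j, η j) + η i))) :=
            (Fintype.prod_sum (fun i x => ψ (x * (β * ((∑ j, η j) + η i))))).symm
        _ = ∏ i : Fin n, if (β * ((∑ j, η j) + η i) = 0) then ((Fintype.card κ : ℂ)) else 0 := by
            refine Finset.prod_congr rfl fun i _ => ?_
            rw [AddChar.sum_mulShift _ hprim]
            split_ifs <;> simp
        _ = if (∀ i, η i = - ∑ j, η j) then ((Fintype.card κ : ℂ)) ^ n else 0 := by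
            by_cases hcond : ∀ i, η i = - ∑ j, η j
            · rw [if_pos hcond]
              have : ∀ i : Fin n, β * ((∑ j, η j) + η i) = 0 := fun i => by
                rw [hcond i]; ring
              simp [this]
            · rw [if_neg hcond]
              push_neg at hcond
              obtain ⟨i, hi⟩ := hcond
              refine Finset.prod_eq_zero (Finset.mem_univ i) ?_
              rw [if_neg]
              intro h
              rcases mul_eq_zero.mp h with h' | h'
              · exact hβ h'
              · exact hi (by linear_combination h')
    have key : G * (starRingEnd ℂ) G = (Fintype.card κ : ℂ) ^ k := by
      rw [hconj, hGdef, Finset.sum_mul_sum, Finset.sum_comm]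
      have hstep : ∀ ε : Fin n → κ,
          (∑ δ : Fin n → κ, ψ (β * gaussOffT n δ δ) * ψ (-(β * gaussOffT n ε ε)))
          = ∑ η : Fin n → κ, ψ (β * gaussOffT n η η)
              * ψ (β * ((∑ i, ε i) * (∑ i, η i) + ∑ i, ε i * η i)) := by
        intro ε
        refine (Fintype.sum_equiv (Equiv.addLeft ε)
          (fun η => ψ (β * gaussOffT n η η)
              * ψ (β * ((∑ i, ε i) * (∑ i, η i) + ∑ i, ε i * η i)))
          (fun δ => ψ (β * gaussOffT n δ δ) * ψ (-(β * gaussOffT n ε ε))) ?_).symm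
        intro η
        simp only [Equiv.coe_addLeft]
        rw [← AddChar.map_add_eq_mul, ← AddChar.map_add_eq_mul]
        congr 1
        rw [gaussOffT_add]
        ring
      calc (∑ ε : Fin n → κ, ∑ δ : Fin n → κ,
              ψ (β * gaussOffT n δ δ) * ψ (-(β * gaussOffT n ε ε)))
          = ∑ ε : Fin n → κ, ∑ η : Fin n → κ, ψ (β * gaussOffT n η η)
              * ψ (β * ((∑ i, ε i) * (∑ i, η i) + ∑ i, ε i * η i)) :=
            Finset.sum_congr rfl fun ε _ => hstep ε
        _ = ∑ η : Fin n → κ, ψ (β * gaussOffT n η η)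
              * ∑ ε : Fin n → κ, ψ (β * ((∑ i, ε i) * (∑ i, η i) + ∑ i, ε i * η i)) := by
            rw [Finset.sum_comm]
            exact Finset.sum_congr rfl fun η _ => by rw [Finset.mul_sum]
        _ = ∑ η : Fin n → κ, ψ (β * gaussOffT n η η)
              * (if (∀ i, η i = - ∑ j, η j) then ((Fintype.card κ : ℂ)) ^ n else 0) :=
            Finset.sum_congr rfl fun η _ => by rw [inner η]
        _ = ∑ η ∈ univ.filter (fun η : Fin n → κ => ∀ i, η i = - ∑ j, η j),
              ψ (β * gaussOffT n η η) * ((Fintype.card κ : ℂ)) ^ n := by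
            rw [Finset.sum_filter]
            exact Finset.sum_congr rfl fun η _ => by rw [mul_ite, mul_zero]
        _ = ∑ η ∈ univ.filter (fun η : Fin n → κ => ∀ i, η i = - ∑ j, η j),
              ((Fintype.card κ : ℂ)) ^ n := by
            refine Finset.sum_congr rfl fun η hη => ?_
            rw [Finset.mem_filter] at hη
            have hηc : η = fun _ : Fin n => - ∑ j, η j := funext fun i => hη.2 i
            rw [show gaussOffT n η η = 0 by rw [hηc]; exact hconst _]
            simp
        _ = (Fintype.card κ : ℂ) ^ k := by
            rw [Finset.sum_const]
            have himg2 : (univ.filter (fun η : Fin n → κ => ∀ i, η i = - ∑ j, η j))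
                = univ.image (fun c : κ => (fun _ : Fin n => c)) := by
              ext η
              simp only [Finset.mem_filter, Finset.mem_univ, true_and, Finset.mem_image]
              constructor
              · intro h
                exact ⟨- ∑ j, η j, (funext fun i => (h i).symm)⟩
              · rintro ⟨c, rfl⟩ i
                simp only [Finset.sum_const, card_univ, Fintype.card_fin, nsmul_eq_mul, hnκ]
                ring
            have hinj : Function.Injective (fun c : κ => (fun _ : Fin n => c)) :=
              fun a b h => congrFun h i0
            rw [himg2, Finset.card_image_of_injective _ hinj, Finset.card_univ,
              nsmul_eq_mul, ← pow_succ', hk1]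
    have habs : ‖G‖ ^ 2 = (Fintype.card κ : ℝ) ^ k := by
      rw [Complex.mul_conj] at key
      have h2' : Complex.normSq G = (Fintype.card κ : ℝ) ^ k := by exact_mod_cast key
      rw [Complex.sq_norm, h2']
    rw [← habs, Real.sqrt_sq (norm_nonneg G)]
  · -- case α ≠ 0
    intro hα
    show (∑ δ : Fin n → κ, ψ (α * ∑ i, δ i + β * gaussOffT n δ δ)) = 0
    obtain ⟨t, ht⟩ := AddChar.ne_one_iff.mp (hprim hα)
    rw [AddChar.mulShift_apply] at ht
    set c : Fin n → κ := fun _ => t with hc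
    set G := ∑ δ : Fin n → κ, ψ (α * ∑ i, δ i + β * gaussOffT n δ δ) with hGdef
    have hshift : ∀ δ : Fin n → κ,
        ψ (α * ∑ i, (δ + c) i + β * gaussOffT n (δ + c) (δ + c))
        = ψ (-(α * t)) * ψ (α * ∑ i, δ i + β * gaussOffT n δ δ) := by
      intro δ
      rw [← AddChar.map_add_eq_mul]
      congr 1
      rw [gaussOffT_add]
      simp only [Pi.add_apply, hc, Finset.sum_add_distrib, Finset.sum_const, card_univ,
        Fintype.card_fin, nsmul_eq_mul, hnκ, hconst, ← Finset.sum_mul]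
      ring
    have hre : ψ (-(α * t)) * G = G := by
      rw [hGdef, Finset.mul_sum]
      refine Fintype.sum_equiv (Equiv.addRight c)
        (fun δ => ψ (-(α * t)) * ψ (α * ∑ i, δ i + β * gaussOffT n δ δ))
        (fun δ => ψ (α * ∑ i, δ i + β * gaussOffT n δ δ)) ?_
      intro δ
      simp only [Equiv.coe_addRight]
      exact (hshift δ).symm
    have hne : ψ (-(α * t)) ≠ 1 := by
      intro h
      apply ht
      have hmul : ψ (-(α * t)) * ψ (α * t) = 1 := by
        rw [← AddChar.map_add_eq_mul, neg_add_cancel, AddChar.map_zero_eq_one]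
      rwa [h, one_mul] at hmul
    have hz : (ψ (-(α * t)) - 1) * G = 0 := by
      rw [sub_mul, one_mul, hre, sub_self]
    exact (mul_eq_zero.mp hz).resolve_left (sub_ne_zero.mpr hne)
end

section
/- Let R be a discrete valuation ring with uniformizer π of residue characteristic p, k ≥ 2 with v = v_p(k), n ≥ 2, and c = min{s ∈ ℕ : π^{(p^r+1)s} p^{v-r} ≡ 0 mod π^n for all r ∈ ℕ, r ≤ v}. Then for all a ∈ R^× and y₁, y₂ ∈ π^c R, (a+y₁+y₂)^{1-k} - (a+y₁)^{1-k} - (a+y₂)^{1-k} + a^{1-k} ≡ 0 mod π^n. -/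
section Auxiliary

variable {R : Type*} [CommRing R]

/-- The ideal generated by `p^(v-r) * t^(p^r)` for `r ≤ v`. -/
def Kid (p v : ℕ) (t : R) : Ideal R :=
  Ideal.span ((fun r => (p : R) ^ (v - r) * t ^ p ^ r) '' Set.Iic v)

lemma mem_Kid (p v : ℕ) (t : R) {r : ℕ} (hr : r ≤ v) :
    (p : R) ^ (v - r) * t ^ p ^ r ∈ Kid p v t :=
  Ideal.subset_span ⟨r, hr, rfl⟩

lemma Kid_mul_mem (p v : ℕ) (t : R) {z : R} (hz : z ∈ Kid p v t) :
    (p : R) * z ∈ Kid p (v + 1) t := by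
  induction hz using Submodule.span_induction with
  | mem x hx =>
      obtain ⟨r, hr, rfl⟩ := hx
      rw [Set.mem_Iic] at hr
      have : (p : R) * ((p : R) ^ (v - r) * t ^ p ^ r) = (p : R) ^ (v + 1 - r) * t ^ p ^ r := by
        rw [show v + 1 - r = (v - r) + 1 by omega, pow_succ]; ring
      rw [this]
      exact mem_Kid p (v+1) t (by omega)
  | zero => simp
  | add x y _ _ hx hy => rw [mul_add]; exact add_mem hx hy
  | smul r x _ hx => rw [smul_eq_mul, show (p:R) * (r * x) = r * ((p:R) * x) by ring]
                     exact Ideal.mul_mem_left _ _ hx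

/-- divisibility transport through the ideal `Kid`. -/
lemma Kid_dvd (p v : ℕ) (t M d : R) (h : ∀ r ≤ v, d ∣ M * ((p : R) ^ (v - r) * t ^ p ^ r))
    {z : R} (hz : z ∈ Kid p v t) : d ∣ M * z := by
  induction hz using Submodule.span_induction with
  | mem x hx => obtain ⟨r, hr, rfl⟩ := hx; exact h r (Set.mem_Iic.mp hr)
  | zero => simp
  | add x y _ _ hx hy => rw [mul_add]; exact dvd_add hx hy
  | smul r x _ hx =>
      rw [smul_eq_mul, show M * (r * x) = r * (M * x) by ring]
      exact Dvd.dvd.mul_left hx r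

lemma ppow_dvd {p : ℕ} (hp : p.Prime) (x : R) :
    (p : R) * x ∣ (1 + x) ^ p - 1 - x ^ p := by
  obtain ⟨q, hq⟩ : ∃ q, p = q + 1 := ⟨p - 1, by have := hp.pos; omega⟩
  have key : (1 + x) ^ p - 1 - x ^ p
      = ∑ k ∈ Finset.range q, x ^ (k+1) * (p.choose (k+1) : R) := by
    rw [show (1:R) + x = x + 1 by ring, hq, add_pow, Finset.sum_range_succ,
      Finset.sum_range_succ']
    simp [Nat.choose_self]
    ring
  rw [key]
  refine Finset.dvd_sum fun k hk => ?_
  have hk' : k < q := Finset.mem_range.mp hk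
  obtain ⟨d, hd⟩ := hp.dvd_choose_self (Nat.succ_ne_zero k) (by omega)
  exact ⟨x ^ k * (d : R), by rw [hd]; push_cast; ring⟩

lemma ppow_sq_dvd {p : ℕ} (hp : p.Prime) (T w : R) :
    (p : R) * (p : R) * w ∣ (T + (p : R) * w) ^ p - T ^ p := by
  have key : (T + (p:R) * w) ^ p - T ^ p
      = ∑ k ∈ Finset.range p, ((p:R)*w) ^ (k+1) * T ^ (p - (k+1)) * (p.choose (k+1) : R) := by
    rw [show T + (p:R)*w = (p:R)*w + T by ring, add_pow, Finset.sum_range_succ']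
    simp
  rw [key]
  refine Finset.dvd_sum fun k hk => ?_
  rcases k with _ | j
  · rw [Nat.choose_one_right]
    exact ⟨T ^ (p - 1), by push_cast; ring⟩
  · exact ⟨w * ((p:R)*w) ^ j * T ^ (p - (j+2)) * (p.choose (j+2) : R), by ring⟩

lemma pow_p_succ {p : ℕ} (hp : p.Prime) : ∀ (v : ℕ) (t : R),
    ∃ w ∈ Kid p v t, (1+t) ^ (p ^ (v+1)) = 1 + t ^ (p ^ (v+1)) + (p:R) * w
  | 0, t => by
    obtain ⟨A, hA⟩ := ppow_dvd hp t
    refine ⟨t * A, Ideal.mul_mem_right A _ ?_, by rw [pow_one]; linear_combination hA⟩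
    have := mem_Kid p 0 t (le_refl 0)
    simpa using this
  | v+1, t => by
    obtain ⟨w, hw, heq⟩ := pow_p_succ hp v t
    set T := t ^ (p ^ (v+1)) with hT
    obtain ⟨A, hA⟩ := ppow_dvd hp (T + (p:R) * w)
    obtain ⟨B, hB⟩ := ppow_sq_dvd hp T w
    refine ⟨T * A + (p:R) * (w * (B + A)), ?_, ?_⟩
    · refine add_mem (Ideal.mul_mem_right A _ ?_) (Kid_mul_mem p v t (Ideal.mul_mem_right _ _ hw))
      simpa using mem_Kid p (v+1) t (le_refl (v+1))
    · have e1 : (1+t) ^ (p ^ (v+1+1)) = ((1+t) ^ (p ^ (v+1))) ^ p := by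
        rw [← pow_mul, pow_succ]
      have e2 : t ^ (p ^ (v+1+1)) = T ^ p := by rw [hT, ← pow_mul, pow_succ]
      rw [e1, heq, e2]
      linear_combination hA + hB

lemma ppow_sub_one_mem {p : ℕ} (hp : p.Prime) (v : ℕ) (t : R) :
    (1+t) ^ (p ^ v) - 1 ∈ Kid p v t := by
  rcases v with _ | v
  · simpa using mem_Kid p 0 t (le_refl 0)
  · obtain ⟨w, hw, heq⟩ := pow_p_succ hp v t
    rw [heq]
    have h1 : 1 + t ^ (p ^ (v+1)) + (p:R) * w - 1 = t ^ (p ^ (v+1)) + (p:R) * w := by ring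
    rw [h1]
    refine add_mem ?_ (Kid_mul_mem p v t hw)
    simpa using mem_Kid p (v+1) t (le_refl (v+1))

lemma pow_sub_one_mem {p : ℕ} (hp : p.Prime) {k : ℕ} (hk : k ≠ 0) (t : R) :
    (1+t) ^ k - 1 ∈ Kid p (padicValNat p k) t := by
  set v := padicValNat p k with hv
  obtain ⟨q, hq⟩ : p ^ v ∣ k := pow_padicValNat_dvd
  have h3 : (1+t) ^ (p ^ v) - 1 ∣ ((1+t) ^ (p ^ v)) ^ q - 1 := by
    simpa using sub_dvd_pow_sub_pow ((1+t) ^ (p ^ v)) 1 q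
  obtain ⟨d, hd⟩ := h3
  have h1 : (1+t) ^ k - 1 = ((1+t) ^ (p ^ v) - 1) * d := by
    rw [← hd, ← pow_mul, ← hq]
  rw [h1]
  exact Ideal.mul_mem_right d _ (ppow_sub_one_mem hp v t)

lemma ring_inverse_eq {x y : R} (h : x * y = 1) : Ring.inverse x = y := by
  have hu : IsUnit x := ⟨⟨x, y, h, by rw [mul_comm]; exact h⟩, rfl⟩
  calc Ring.inverse x = Ring.inverse x * (x * y) := by rw [h, mul_one]
  _ = y := by rw [← mul_assoc, Ring.inverse_mul_cancel x hu, one_mul]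

end Auxiliary

/-- Let `R` be a discrete valuation ring with uniformizer `π` and residue characteristic `p`,
`k ≥ 2` with `v = v_p(k)`, `n ≥ 2`, and
`c = min {s : π^{(p^r+1)s} p^{v-r} ≡ 0 mod π^n for all r ≤ v}`. Then for every unit `a` and
`y₁, y₂ ∈ π^c R`, `(a+y₁+y₂)^{1-k} - (a+y₁)^{1-k} - (a+y₂)^{1-k} + a^{1-k} ≡ 0 mod π^n`. -/
theorem homomorphism_equation
    (R : Type*) [CommRing R] [IsDomain R] [IsDiscreteValuationRing R]
    (π : R) (hπ : Irreducible π) (p : ℕ) (hp : p.Prime)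
    [CharP (R ⧸ Ideal.span {π}) p]
    (k : ℕ) (hk : 2 ≤ k) (v : ℕ) (hv : v = padicValNat p k) (n : ℕ) (hn : 2 ≤ n)
    (c : ℕ)
    (hc : c = sInf {s : ℕ | ∀ r ≤ v, π ^ n ∣ π ^ ((p ^ r + 1) * s) * (p : R) ^ (v - r)})
    (a : Rˣ) (y₁ y₂ : R)
    (hy₁ : y₁ ∈ Ideal.span {π} ^ c) (hy₂ : y₂ ∈ Ideal.span {π} ^ c) :
    Ring.inverse ((↑a + y₁ + y₂) ^ (k - 1)) - Ring.inverse ((↑a + y₁) ^ (k - 1))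
      - Ring.inverse ((↑a + y₂) ^ (k - 1)) + Ring.inverse ((a : R) ^ (k - 1))
      ∈ Ideal.span {π} ^ n := by
  obtain ⟨m, rfl⟩ : ∃ m, k = m + 1 := ⟨k - 1, by omega⟩
  simp only [Nat.add_sub_cancel]
  rw [Ideal.span_singleton_pow, Ideal.mem_span_singleton] at hy₁ hy₂ ⊢
  -- facts about c
  have HC : ∀ r ≤ v, π ^ n ∣ π ^ ((p ^ r + 1) * c) * (p : R) ^ (v - r) := by
    rw [hc]
    have hnS : ∀ r ≤ v, π ^ n ∣ π ^ ((p ^ r + 1) * n) * (p : R) ^ (v - r) := fun r hr =>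
      dvd_mul_of_dvd_left (pow_dvd_pow π (Nat.le_mul_of_pos_left n (by positivity))) _
    exact Nat.sInf_mem
      (s := {s : ℕ | ∀ r ≤ v, π ^ n ∣ π ^ ((p ^ r + 1) * s) * (p : R) ^ (v - r)}) ⟨n, hnS⟩
  have hc1 : 1 ≤ c := by
    by_contra h
    have hc0 : c = 0 := by omega
    have h1 := HC v (le_refl v)
    rw [hc0, Nat.mul_zero, pow_zero, Nat.sub_self, pow_zero, one_mul] at h1
    exact hπ.not_isUnit (isUnit_of_dvd_one (dvd_trans (dvd_pow_self π (by omega)) h1))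
  have hπy₁ : π ∣ y₁ := dvd_trans (dvd_pow_self π (by omega)) hy₁
  have hπy₂ : π ∣ y₂ := dvd_trans (dvd_pow_self π (by omega)) hy₂
  obtain ⟨t₁, ht₁⟩ := hy₁
  obtain ⟨t₂, ht₂⟩ := hy₂
  -- units
  have hunit1 : ∀ x : R, π ∣ x → IsUnit (1 + x) := by
    intro x hx
    by_contra h
    have hxm : 1 + x ∈ IsLocalRing.maximalIdeal R := by
      rw [IsLocalRing.mem_maximalIdeal, mem_nonunits_iff]; exact h
    have hxm2 : x ∈ IsLocalRing.maximalIdeal R := by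
      rw [hπ.maximalIdeal_eq, Ideal.mem_span_singleton]; exact hx
    have h1 : (1 : R) ∈ IsLocalRing.maximalIdeal R := by
      have := sub_mem hxm hxm2; simpa using this
    exact (IsLocalRing.maximalIdeal.isMaximal R).ne_top
      (Ideal.eq_top_of_isUnit_mem _ h1 isUnit_one)
  obtain ⟨w, haw⟩ : ∃ w, (a : R) * w = 1 := ⟨↑a⁻¹, a.mul_inv⟩
  have hBu : IsUnit ((a : R) + y₁) := by
    have h1 : (a : R) + y₁ = (a : R) * (1 + w * y₁) := by linear_combination (-y₁) * haw
    rw [h1]; exact a.isUnit.mul (hunit1 _ (hπy₁.mul_left w))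
  obtain ⟨B', hB'⟩ : ∃ z, ((a : R) + y₁) * z = 1 := ⟨↑hBu.unit⁻¹, hBu.mul_val_inv⟩
  obtain ⟨EA, hEAdef⟩ : ∃ x : R, x = 1 + y₂ * w := ⟨_, rfl⟩
  have hEAu : IsUnit EA := hEAdef ▸ hunit1 _ (hπy₂.mul_right w)
  obtain ⟨EA', hEA'⟩ : ∃ z, EA * z = 1 := ⟨↑hEAu.unit⁻¹, hEAu.mul_val_inv⟩
  obtain ⟨EB, hEBdef⟩ : ∃ x : R, x = 1 + y₂ * B' := ⟨_, rfl⟩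
  have hEBu : IsUnit EB := hEBdef ▸ hunit1 _ (hπy₂.mul_right B')
  obtain ⟨EB', hEB'⟩ : ∃ z, EB * z = 1 := ⟨↑hEBu.unit⁻¹, hEBu.mul_val_inv⟩
  -- factorizations
  have hfac1 : (a : R) + y₁ + y₂ = ((a : R) + y₁) * EB := by
    rw [hEBdef]; linear_combination (-y₂) * hB'
  have hfac2 : (a : R) + y₂ = (a : R) * EA := by
    rw [hEAdef]; linear_combination (-y₂) * haw
  -- rewrite the inverses
  have hinv1 : Ring.inverse (((a:R) + y₁ + y₂) ^ m) = B' ^ m * EB' ^ m := by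
    apply ring_inverse_eq
    have e : (((a:R)+y₁)*EB)^m * (B'^m*EB'^m) = (((a:R)+y₁)*B')^m * (EB*EB')^m := by
      rw [mul_pow ((a:R)+y₁) EB, mul_pow ((a:R)+y₁) B', mul_pow EB EB']; ring
    rw [hfac1, e, hB', hEB']; simp
  have hinv2 : Ring.inverse (((a:R) + y₁) ^ m) = B' ^ m := by
    apply ring_inverse_eq
    rw [← mul_pow, hB', one_pow]
  have hinv3 : Ring.inverse (((a:R) + y₂) ^ m) = w ^ m * EA' ^ m := by
    apply ring_inverse_eq
    have e : ((a:R)*EA)^m * (w^m*EA'^m) = ((a:R)*w)^m * (EA*EA')^m := by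
      rw [mul_pow (a:R) EA, mul_pow (a:R) w, mul_pow EA EA']; ring
    rw [hfac2, e, haw, hEA']; simp
  have hinv4 : Ring.inverse ((a:R) ^ m) = w ^ m := by
    apply ring_inverse_eq
    rw [← mul_pow, haw, one_pow]
  rw [hinv1, hinv2, hinv3, hinv4]
  -- the central algebraic identity
  have A3 : EB^(m+1) * EB'^(m+1) = 1 := by rw [← mul_pow, hEB', one_pow]
  have A5 : EA^(m+1) * EA'^(m+1) = 1 := by rw [← mul_pow, hEA', one_pow]
  have HX : B'^m*EB'^m - B'^m - w^m*EA'^m + w^m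
      = y₂*(B'^(m+1)*EB'^(m+1) - w^(m+1)*EA'^(m+1))
        - B'^m*EB'^(m+1)*(EB^(m+1) - EA^(m+1))
        - (((a:R)+y₁)*(B'^(m+1)*EB'^(m+1)) - (a:R)*(w^(m+1)*EA'^(m+1)))*(EA^(m+1) - 1) := by
    linear_combination (-(B'^m*EB'^m)) * hEB' + (B'^m*EB'^(m+1)) * hEBdef + B'^m * A3
      - w^m * A5 + (w^m*EA'^m) * hEA' - (w^m*EA'^(m+1)) * hEAdef
      + ((EA^(m+1)-1)*EB'^(m+1)*B'^m) * hB' - ((EA^(m+1)-1)*EA'^(m+1)*w^m) * haw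
  rw [HX]
  -- more unit facts
  have hP : ((a:R) + y₁ + y₂) * (B' * EB') = 1 := by
    rw [hfac1]; linear_combination (EB * EB') * hB' + hEB'
  have hQ : ((a:R) + y₂) * (w * EA') = 1 := by
    rw [hfac2]; linear_combination (EA * EA') * haw + hEA'
  have hpowP : ((a:R) + y₁ + y₂) ^ (m+1) * (B' * EB') ^ (m+1) = 1 := by
    rw [← mul_pow, hP, one_pow]
  have hpowQ : ((a:R) + y₂) ^ (m+1) * (w * EA') ^ (m+1) = 1 := by
    rw [← mul_pow, hQ, one_pow]
  -- Piece 1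
  have hfac3 : (a:R) + y₁ + y₂ = ((a:R) + y₂) * (1 + y₁ * (w * EA')) := by
    linear_combination (-y₁) * hQ
  have hpow3 : ((a:R) + y₁ + y₂) ^ (m+1)
      = ((a:R) + y₂) ^ (m+1) * (1 + y₁ * (w * EA')) ^ (m+1) := by
    rw [hfac3, mul_pow]
  have hz₁ : (1 + y₁ * (w * EA')) ^ (m+1) - 1 ∈ Kid p v (y₁ * (w * EA')) := by
    have h0 := pow_sub_one_mem hp (Nat.succ_ne_zero m) (y₁ * (w * EA'))
    rwa [← hv] at h0
  have hT1eq : y₂ * (B'^(m+1) * EB'^(m+1) - w^(m+1) * EA'^(m+1))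
      = (-(y₂ * (B'*EB')^(m+1) * (w*EA')^(m+1) * ((a:R)+y₂)^(m+1)))
        * ((1 + y₁ * (w * EA')) ^ (m+1) - 1) := by
    linear_combination (-(y₂*(B'*EB')^(m+1)*(w*EA')^(m+1))) * hpow3
      + (y₂*(w*EA')^(m+1)) * hpowP - (y₂*(B'*EB')^(m+1)) * hpowQ
  have hT1 : π ^ n ∣ y₂ * (B'^(m+1) * EB'^(m+1) - w^(m+1) * EA'^(m+1)) := by
    rw [hT1eq]
    refine Kid_dvd p v _ _ _ (fun r hr => ?_) hz₁
    refine dvd_trans (HC r hr) ⟨-(t₂ * (B'*EB')^(m+1) * (w*EA')^(m+1) * ((a:R)+y₂)^(m+1)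
      * (t₁ * (w * EA')) ^ (p ^ r)), ?_⟩
    rw [ht₁, ht₂]; ring
  -- Piece 2
  have hBW : B' = w - y₁ * (B' * w) := by linear_combination w * hB' - B' * haw
  have hδeq : EB = EA * (1 + -(y₁ * y₂ * (B' * w * EA'))) := by
    linear_combination hEBdef - hEAdef + y₂ * hBW + (y₁ * y₂ * (B' * w)) * hEA'
  have hpowδ : EB ^ (m+1) = EA ^ (m+1) * (1 + -(y₁ * y₂ * (B' * w * EA'))) ^ (m+1) := by
    rw [hδeq, mul_pow]
  have hz₂ : (1 + -(y₁ * y₂ * (B' * w * EA'))) ^ (m+1) - 1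
      ∈ Kid p v (-(y₁ * y₂ * (B' * w * EA'))) := by
    have h0 := pow_sub_one_mem hp (Nat.succ_ne_zero m) (-(y₁ * y₂ * (B' * w * EA')))
    rwa [← hv] at h0
  have hT2eq : B'^m * EB'^(m+1) * (EB^(m+1) - EA^(m+1))
      = (B'^m * EB'^(m+1) * EA^(m+1)) * ((1 + -(y₁ * y₂ * (B' * w * EA'))) ^ (m+1) - 1) := by
    linear_combination (B'^m * EB'^(m+1)) * hpowδ
  have hT2 : π ^ n ∣ B'^m * EB'^(m+1) * (EB^(m+1) - EA^(m+1)) := by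
    rw [hT2eq]
    refine Kid_dvd p v _ _ _ (fun r hr => ?_) hz₂
    refine dvd_trans (HC r hr) ?_
    have h2 : π ^ (2 * c) ∣ -(y₁ * y₂ * (B' * w * EA')) :=
      ⟨-(t₁ * t₂ * (B' * w * EA')), by rw [ht₁, ht₂]; ring⟩
    have h3 := pow_dvd_pow_of_dvd h2 (p ^ r)
    rw [← pow_mul] at h3
    have hle : (p ^ r + 1) * c ≤ 2 * c * p ^ r := by nlinarith [pow_pos hp.pos r]
    obtain ⟨g, hg⟩ := dvd_trans (pow_dvd_pow π hle) h3
    exact ⟨g * (B'^m * EB'^(m+1) * EA^(m+1)), by rw [hg]; ring⟩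
  -- Piece 3
  have hsub : y₁ ∣ ((a:R) + y₁ + y₂) ^ (m+1) - ((a:R) + y₂) ^ (m+1) := by
    have h0 := sub_dvd_pow_sub_pow ((a:R) + y₁ + y₂) ((a:R) + y₂) (m+1)
    have h1 : (a:R) + y₁ + y₂ - ((a:R) + y₂) = y₁ := by ring
    rwa [h1] at h0
  obtain ⟨g₃, hg₃⟩ := hsub
  have hz₃ : EA ^ (m+1) - 1 ∈ Kid p v (y₂ * w) := by
    rw [hEAdef]
    have h0 := pow_sub_one_mem hp (Nat.succ_ne_zero m) (y₂ * w)
    rwa [← hv] at h0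
  have hT3eq : ((a:R)+y₁) * (B'^(m+1) * EB'^(m+1)) - (a:R) * (w^(m+1) * EA'^(m+1))
      = y₁ * (B'^(m+1) * EB'^(m+1) - (a:R) * ((B'*EB')^(m+1) * (w*EA')^(m+1)) * g₃) := by
    linear_combination ((a:R) * (w*EA')^(m+1)) * hpowP - ((a:R) * (B'*EB')^(m+1)) * hpowQ
      - ((a:R) * (B'*EB')^(m+1) * (w*EA')^(m+1)) * hg₃
  have hT3 : π ^ n ∣ (((a:R)+y₁) * (B'^(m+1) * EB'^(m+1)) - (a:R) * (w^(m+1) * EA'^(m+1)))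
      * (EA^(m+1) - 1) := by
    rw [hT3eq]
    refine Kid_dvd p v _ _ _ (fun r hr => ?_) hz₃
    refine dvd_trans (HC r hr) ⟨t₁ * (B'^(m+1) * EB'^(m+1)
      - (a:R) * ((B'*EB')^(m+1) * (w*EA')^(m+1)) * g₃) * (t₂ * w) ^ (p ^ r), ?_⟩
    rw [ht₁, ht₂]; ring
  exact dvd_sub (dvd_sub hT1 hT2) hT3
end

section
/- Let R be a discrete valuation ring with uniformizer π of residue characteristic p, k ≥ 2 with v = v_p(k), n ≥ 2, and c defined as min{s : π^{(p^r+1)s} p^{v-r} ≡ 0 mod π^n for all 0 ≤ r ≤ v}. Then for every a ∈ R/π^n R and z ∈ π^c R, a^k ≡ (a+z)^k mod π^{⌈n/2⌉}. -/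
/-- In a DVR, if `π^n ∣ x^2` then `π^((n+1)/2) ∣ x`. -/
lemma kth_power_congruence_sqrt_aux
    {R : Type*} [CommRing R] [IsDomain R] [IsDiscreteValuationRing R]
    {π : R} (hπ : Irreducible π) {n : ℕ} {x : R} (h : π ^ n ∣ x ^ 2) :
    π ^ ((n + 1) / 2) ∣ x := by
  rcases eq_or_ne x 0 with rfl | hx
  · exact dvd_zero _
  obtain ⟨m, u, hxu⟩ := IsDiscreteValuationRing.eq_unit_mul_pow_irreducible hx hπ
  have h2 : π ^ n ∣ π ^ (2 * m) := by
    have : x ^ 2 = (u : R) ^ 2 * π ^ (2 * m) := by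
      rw [hxu]; rw [mul_pow, ← pow_mul, mul_comm m 2]
    rw [this] at h
    exact (Units.dvd_mul_left (u := u ^ 2)).mp (by simpa [mul_comm] using h)
  have hle : n ≤ 2 * m := (pow_dvd_pow_iff hπ.ne_zero hπ.not_isUnit).mp h2
  have hMm : (n + 1) / 2 ≤ m := by omega
  exact (pow_dvd_pow π hMm).trans ⟨(u : R), by rw [hxu, mul_comm]⟩

/-- Let `R` be a discrete valuation ring with uniformizer `π` and residue characteristic `p`,
`k ≥ 2` with `v = v_p(k)`, `n ≥ 2`, and
`c = min {s : π^{(p^r+1)s} p^{v-r} ≡ 0 mod π^n for all r ≤ v}`. Then for every `a ∈ R` and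
`z ∈ π^c R`, `a^k ≡ (a+z)^k mod π^{⌈n/2⌉}`. -/
theorem kth_power_congruence
    (R : Type*) [CommRing R] [IsDomain R] [IsDiscreteValuationRing R]
    (π : R) (hπ : Irreducible π) (p : ℕ) (hp : p.Prime)
    [CharP (R ⧸ Ideal.span {π}) p]
    (k : ℕ) (hk : 2 ≤ k) (v : ℕ) (hv : v = padicValNat p k) (n : ℕ) (hn : 2 ≤ n)
    (c : ℕ)
    (hc : c = sInf {s : ℕ | ∀ r ≤ v, π ^ n ∣ π ^ ((p ^ r + 1) * s) * (p : R) ^ (v - r)})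
    (a : R) (z : R) (hz : z ∈ Ideal.span {π} ^ c) :
    (a + z) ^ k - a ^ k ∈ Ideal.span {π} ^ ((n + 1) / 2) := by
  haveI : Fact p.Prime := ⟨hp⟩
  set M := (n + 1) / 2 with hM
  -- `c` itself belongs to the defining set
  have hcS : ∀ r ≤ v, π ^ n ∣ π ^ ((p ^ r + 1) * c) * (p : R) ^ (v - r) := by
    have hne : n ∈ {s : ℕ | ∀ r ≤ v, π ^ n ∣ π ^ ((p ^ r + 1) * s) * (p : R) ^ (v - r)} := by
      intro r _
      exact Dvd.dvd.mul_right (pow_dvd_pow π (Nat.le_mul_of_pos_left n (by positivity))) _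
    have := Nat.sInf_mem (s := {s : ℕ | ∀ r ≤ v, π ^ n ∣ π ^ ((p ^ r + 1) * s) * (p : R) ^ (v - r)})
      ⟨n, hne⟩
    rwa [← hc] at this
  -- reduce to a divisibility statement
  rw [Ideal.span_singleton_pow, Ideal.mem_span_singleton] at hz ⊢
  obtain ⟨w, hw⟩ := hz
  -- binomial expansion
  have hexp : (a + z) ^ k - a ^ k =
      ∑ j ∈ Finset.range k, z ^ (j + 1) * a ^ (k - (j + 1)) * (k.choose (j + 1) : R) := by
    have := add_pow z a k
    rw [Finset.sum_range_succ'] at this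
    simp only [pow_zero, Nat.sub_zero, Nat.choose_zero_right, Nat.cast_one, one_mul, mul_one]
      at this
    rw [add_comm a z, this]
    ring
  rw [hexp]
  refine Finset.dvd_sum fun j hj => ?_
  set i := j + 1 with hi
  set r := min v (padicValNat p i) with hr
  have hik : i ≤ k := Nat.succ_le_of_lt (Finset.mem_range.mp hj)
  -- `p ^ (v - r)` divides the binomial coefficient
  have hvle : v ≤ padicValNat p (k.choose i) + padicValNat p i := by
    have hdvd : p ^ v ∣ k.choose i * i := by
      have hkk : k * (k - 1).choose j = k.choose i * i := by
        have := Nat.add_one_mul_choose_eq (k - 1) j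
        rwa [Nat.sub_add_cancel (by omega)] at this
      have hpk : p ^ v ∣ k := hv ▸ pow_padicValNat_dvd
      exact hkk ▸ (hpk.mul_right _)
    have hne : k.choose i * i ≠ 0 :=
      Nat.mul_ne_zero (Nat.choose_pos hik).ne' (by omega)
    have := (padicValNat_dvd_iff_le hne).mp hdvd
    rwa [padicValNat.mul (Nat.choose_pos hik).ne' (by omega)] at this
  have hchoose : p ^ (v - r) ∣ k.choose i := by
    refine dvd_trans (pow_dvd_pow p ?_) pow_padicValNat_dvd
    omega
  -- `p ^ r ≤ i`
  have hpri : p ^ r ≤ i := by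
    calc p ^ r ≤ p ^ padicValNat p i :=
          Nat.pow_le_pow_right hp.one_lt.le (min_le_right _ _)
      _ ≤ i := Nat.le_of_dvd (by omega) pow_padicValNat_dvd
  -- key divisibility
  have hkey : π ^ M ∣ π ^ (i * c) * (p : R) ^ (v - r) := by
    refine kth_power_congruence_sqrt_aux hπ ?_
    refine (hcS r (min_le_left _ _)).trans ?_
    have h2i : p ^ r + 1 ≤ 2 * i := by omega
    have h1 : (p ^ r + 1) * c ≤ i * c * 2 := by
      calc (p ^ r + 1) * c ≤ 2 * i * c := Nat.mul_le_mul_right c h2i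
        _ = i * c * 2 := by ring
    obtain ⟨d, hd⟩ : ∃ d, i * c * 2 = (p ^ r + 1) * c + d :=
      ⟨i * c * 2 - (p ^ r + 1) * c, by omega⟩
    refine ⟨π ^ d * (p : R) ^ (v - r), ?_⟩
    rw [mul_pow, ← pow_mul, hd, pow_add]
    ring
  refine hkey.trans ?_
  obtain ⟨m, hm⟩ := hchoose
  refine ⟨w ^ i * a ^ (k - i) * (m : R), ?_⟩
  rw [hw, hm, mul_pow, ← pow_mul, Nat.cast_mul, Nat.cast_pow]
  ring
end

section
/- Let p be a prime, k an integer with v = v_p(k), and i an integer with p^r ≤ i < p^{r+1} for some r ≤ v. Then the p-adic valuation of the binomial coefficient binom(k, i) is at least v - r. -/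
/-- For a prime `p`, a positive integer `k` with `v = v_p(k)`, and `i` with
`p^r ≤ i < p^(r+1)` for some `r ≤ v`, the `p`-adic valuation of `binom(k, i)`
is at least `v - r`. -/
theorem padicValNat_choose_lower_bound (p : ℕ) (hp : p.Prime) (k : ℕ) (hk : 0 < k)
    (v : ℕ) (hv : v = padicValNat p k) (r i : ℕ) (hr : r ≤ v)
    (hi₁ : p ^ r ≤ i) (hi₂ : i < p ^ (r + 1)) :
    v - r ≤ padicValNat p (k.choose i) := by
  rcases eq_or_lt_of_le hr with h | h
  · simp [h]
  -- r < v, so r + 1 ≤ v, hence i < p^(r+1) ≤ p^v ≤ k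
  have hpv : p ^ v ∣ k := by
    rw [hv]; exact pow_padicValNat_dvd
  have hik : i ≤ k := by
    calc i ≤ p ^ (r + 1) := hi₂.le
    _ ≤ p ^ v := Nat.pow_le_pow_right hp.one_lt.le h
    _ ≤ k := Nat.le_of_dvd hk hpv
  have hi0 : 0 < i := lt_of_lt_of_le (pow_pos hp.pos r) hi₁
  have hchoose : 0 < k.choose i := Nat.choose_pos hik
  -- key identity: k.choose i * i = k * (k-1).choose (i-1)
  have hid : k.choose i * i = k * (k-1).choose (i-1) := by
    have := Nat.add_one_mul_choose_eq (k - 1) (i - 1)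
    simp only [Nat.succ_eq_add_one, Nat.sub_add_cancel hk, Nat.sub_add_cancel hi0] at this
    exact this.symm
  have hval : padicValNat p (k.choose i) + padicValNat p i
      = padicValNat p k + padicValNat p ((k-1).choose (i-1)) := by
    haveI : Fact p.Prime := ⟨hp⟩
    rw [← padicValNat.mul (by omega) (by omega), hid,
      padicValNat.mul (by omega) (Nat.choose_pos (by omega : i - 1 ≤ k - 1)).ne']
  have hvi : padicValNat p i ≤ r := by
    by_contra hcon
    push_neg at hcon
    have : p ^ (r + 1) ∣ i := dvd_trans (pow_dvd_pow p hcon) pow_padicValNat_dvd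
    exact absurd (Nat.le_of_dvd hi0 this) (by omega)
  omega
end

section
/- Let 𝔽_q[T], π irreducible, n ≥ 2, N = n·deg(π) - 1. Let 𝒬 be the set of pairs (g,h) of coprime monic polynomials prime to π with a ≡ βg/h mod π^{n-1} for some β ∈ 𝔽_q^×, where a ∈ (𝔽_q[T]/π^n)^× is fixed. Then the number of (g,h) ∈ 𝒬 with q^N/|π|² < |g||h| ≤ q^N is at most n·deg(π)·(q-1)·|π|, where |f| = q^{deg f}. -/
open Polynomial in
/-- The number of coprime monic pairs `(g,h)` prime to `π` with `a ≡ βg/h mod π^{n-1}` for some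
`β ∈ 𝔽_q^×` and `q^N/|π|² < |g||h| ≤ q^N`, where `N = n·deg π - 1`, is at most
`n · deg π · (q-1) · |π|`. -/
theorem count_diagonal_pairs
    (𝔽q : Type*) [Field 𝔽q] [Fintype 𝔽q]
    (π : Polynomial 𝔽q) (hπ : Irreducible π) (n : ℕ) (hn : 2 ≤ n)
    (N : ℕ) (hN : N = n * π.natDegree - 1)
    (a : Polynomial 𝔽q) (ha : ¬ π ∣ a) :
    Nat.card {gh : Polynomial 𝔽q × Polynomial 𝔽q |
        gh.1.Monic ∧ gh.2.Monic ∧ ¬ π ∣ gh.1 ∧ ¬ π ∣ gh.2 ∧ IsCoprime gh.1 gh.2 ∧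
        (∃ β : 𝔽qˣ, π ^ (n - 1) ∣ a * gh.2 - Polynomial.C (β : 𝔽q) * gh.1) ∧
        N - 2 * π.natDegree < gh.1.natDegree + gh.2.natDegree ∧
        gh.1.natDegree + gh.2.natDegree ≤ N} ≤
      n * π.natDegree * (Fintype.card 𝔽q - 1) * Fintype.card 𝔽q ^ π.natDegree := by
  classical
  set S := {gh : Polynomial 𝔽q × Polynomial 𝔽q |
        gh.1.Monic ∧ gh.2.Monic ∧ ¬ π ∣ gh.1 ∧ ¬ π ∣ gh.2 ∧ IsCoprime gh.1 gh.2 ∧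
        (∃ β : 𝔽qˣ, π ^ (n - 1) ∣ a * gh.2 - Polynomial.C (β : 𝔽q) * gh.1) ∧
        N - 2 * π.natDegree < gh.1.natDegree + gh.2.natDegree ∧
        gh.1.natDegree + gh.2.natDegree ≤ N} with hSdef
  have hπ0 : π ≠ 0 := hπ.ne_zero
  have hD : 0 < π.natDegree := hπ.natDegree_pos
  have hM2 : 2 ≤ n * π.natDegree := le_trans hn (Nat.le_mul_of_pos_right n hD)
  obtain ⟨M, hMdef⟩ : ∃ M, M = n * π.natDegree := ⟨_, rfl⟩
  rw [← hMdef] at hN hM2 ⊢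
  -- the monic associate of π
  have hlc : π.leadingCoeff ≠ 0 := leadingCoeff_ne_zero.mpr hπ0
  set π' : Polynomial 𝔽q := π * C π.leadingCoeff⁻¹ with hπ'def
  have hmon : π'.Monic := monic_mul_leadingCoeff_inv hπ0
  have hcunit : IsUnit (C π.leadingCoeff⁻¹ : Polynomial 𝔽q) :=
    isUnit_C.mpr (isUnit_iff_ne_zero.mpr (inv_ne_zero hlc))
  have hassoc : Associated π π' := ⟨hcunit.unit, by rw [IsUnit.unit_spec]⟩
  have hassocpow : ∀ k : ℕ, Associated (π ^ k) (π' ^ k) := fun k => hassoc.pow_pow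
  have hπ'pow : ∀ k : ℕ, (π' ^ k).natDegree = k * π.natDegree := by
    intro k
    rw [natDegree_pow, hπ'def, natDegree_mul hπ0
      (fun hc => inv_ne_zero hlc (C_eq_zero.mp hc)), natDegree_C, add_zero]
  -- the key existence statement
  have key : ∀ x : S, ∃ y : Fin M × 𝔽qˣ × (degreeLT 𝔽q π.natDegree),
      (y.1 : ℕ) = x.1.2.natDegree ∧
      ∃ c : Polynomial 𝔽q, π' ^ n ∣ x.1.2 * c - 1 ∧
        π' ^ n ∣ x.1.1 * c -
          ((C ((y.2.1 : 𝔽q))⁻¹ * a) %ₘ π' ^ (n - 1) +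
            π' ^ (n - 1) * (y.2.2 : Polynomial 𝔽q)) := by
    rintro ⟨⟨g, h⟩, hx⟩
    simp only [hSdef, Set.mem_setOf_eq] at hx
    obtain ⟨hg, hh, hgπ, hhπ, hcop, ⟨β, hβ⟩, hlow, hup⟩ := hx
    -- inverse of h modulo π'^n
    have hcophπ : IsCoprime (π' ^ n) h := by
      have h1 : IsCoprime π h := (hπ.coprime_iff_not_dvd).mpr hhπ
      have h2 : IsCoprime (C π.leadingCoeff⁻¹ : Polynomial 𝔽q) h :=
        ⟨C π.leadingCoeff, 0, by
          rw [← C_mul, mul_inv_cancel₀ hlc]; simp⟩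
      exact (h1.mul_left h2).pow_left
    obtain ⟨u, c, huc⟩ := hcophπ
    have hc1 : π' ^ n ∣ h * c - 1 := ⟨-u, by linear_combination huc⟩
    set r : Polynomial 𝔽q := (g * c) %ₘ π' ^ n with hrdef
    have hr : π' ^ n ∣ g * c - r := by
      refine ⟨g * c /ₘ π' ^ n, ?_⟩
      have := modByMonic_eq_sub_mul_div (g * c) (π' ^ n)
      rw [hrdef, this]; ring
    set γ : 𝔽q := (β : 𝔽q) with hγdef
    have hγ0 : γ ≠ 0 := Units.ne_zero β
    have hγC : (C γ : Polynomial 𝔽q) * C γ⁻¹ = 1 := by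
      rw [← C_mul, mul_inv_cancel₀ hγ0, C_1]
    set ρ : Polynomial 𝔽q := (C γ⁻¹ * a) %ₘ π' ^ (n - 1) with hρdef
    have hρ : π' ^ (n - 1) ∣ C γ⁻¹ * a - ρ := by
      refine ⟨(C γ⁻¹ * a) /ₘ π' ^ (n - 1), ?_⟩
      have := modByMonic_eq_sub_mul_div (C γ⁻¹ * a) (π' ^ (n - 1))
      rw [hρdef, this]; ring
    have hβ' : π' ^ (n - 1) ∣ a * h - C γ * g := (hassocpow (n - 1)).dvd_iff_dvd_left.mp hβ
    have hc1' : π' ^ (n - 1) ∣ h * c - 1 := dvd_trans (pow_dvd_pow π' (by omega)) hc1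
    have hr' : π' ^ (n - 1) ∣ g * c - r := dvd_trans (pow_dvd_pow π' (by omega)) hr
    -- π'^(n-1) ∣ r - ρ
    have hrρ : π' ^ (n - 1) ∣ r - ρ := by
      obtain ⟨w1, e1⟩ := hr'
      obtain ⟨w2, e2⟩ := hβ'
      obtain ⟨w3, e3⟩ := hc1'
      obtain ⟨w4, e4⟩ := hρ
      have hkey : π' ^ (n - 1) ∣ C γ * (r - ρ) :=
        ⟨-C γ * w1 - c * w2 + a * w3 + C γ * w4, by
          linear_combination (-C γ) * e1 - c * e2 + a * e3 + C γ * e4 - a * hγC⟩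
      have : r - ρ = C γ⁻¹ * (C γ * (r - ρ)) := by
        rw [← mul_assoc, ← C_mul, inv_mul_cancel₀ hγ0, C_1, one_mul]
      rw [this]
      exact Dvd.dvd.mul_left hkey _
    obtain ⟨t, ht⟩ := hrρ
    -- degree bounds
    have hπ'n0 : (π' : Polynomial 𝔽q) ≠ 0 := hmon.ne_zero
    have hrdeg : r.natDegree < M := by
      rcases eq_or_ne r 0 with h0 | h0
      · rw [h0, natDegree_zero]; omega
      · have hlt := degree_modByMonic_lt (g * c) (hmon.pow n)
        have := natDegree_lt_natDegree h0 hlt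
        rwa [hπ'pow n, ← hMdef] at this
    have hρdeg : ρ.natDegree < M := by
      rcases eq_or_ne ρ 0 with h0 | h0
      · rw [h0, natDegree_zero]; omega
      · have hlt := degree_modByMonic_lt (C γ⁻¹ * a) (hmon.pow (n - 1))
        have h2 := natDegree_lt_natDegree h0 hlt
        rw [hπ'pow (n - 1)] at h2
        have h3 : (n - 1) * π.natDegree < n * π.natDegree :=
          (Nat.mul_lt_mul_right hD).mpr (by omega)
        omega
    have htmem : t ∈ degreeLT 𝔽q π.natDegree := by
      rw [mem_degreeLT]
      rcases eq_or_ne t 0 with h0 | h0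
      · rw [h0, degree_zero]
        exact WithBot.bot_lt_coe _
      · have hne : (r - ρ).natDegree = (n - 1) * π.natDegree + t.natDegree := by
          rw [ht, natDegree_mul (pow_ne_zero _ hπ'n0) h0, hπ'pow]
        have hsub : (r - ρ).natDegree < M :=
          lt_of_le_of_lt (natDegree_sub_le r ρ) (max_lt hrdeg hρdeg)
        have hsum : (n - 1) * π.natDegree + π.natDegree = n * π.natDegree := by
          have hn1 : n - 1 + 1 = n := by omega
          calc (n - 1) * π.natDegree + π.natDegree = ((n - 1) + 1) * π.natDegree := by ring
          _ = n * π.natDegree := by rw [hn1]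
        have htD : t.natDegree < π.natDegree := by omega
        exact (natDegree_lt_iff_degree_lt h0).mp htD
    have hhM : h.natDegree < M := by omega
    refine ⟨⟨⟨h.natDegree, hhM⟩, β, ⟨t, htmem⟩⟩, rfl, c, hc1, ?_⟩
    show π' ^ n ∣ g * c - ((C γ⁻¹ * a) %ₘ π' ^ (n - 1) + π' ^ (n - 1) * t)
    have hX : (C γ⁻¹ * a) %ₘ π' ^ (n - 1) + π' ^ (n - 1) * t = r := by
      rw [← hρdef]; linear_combination -ht
    rw [hX]
    exact hr
  choose f hf1 hf2 using key
  have hinj : Function.Injective f := by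
    intro x₁ x₂ hfeq
    obtain ⟨c₁, hc₁, hr₁⟩ := hf2 x₁
    obtain ⟨c₂, hc₂, hr₂⟩ := hf2 x₂
    have hk : x₁.1.2.natDegree = x₂.1.2.natDegree := by
      rw [← hf1 x₁, ← hf1 x₂, hfeq]
    rw [hfeq] at hr₁
    obtain ⟨⟨g₁, h₁⟩, hx₁⟩ := x₁
    obtain ⟨⟨g₂, h₂⟩, hx₂⟩ := x₂
    simp only [hSdef, Set.mem_setOf_eq] at hx₁ hx₂
    obtain ⟨hg₁, hh₁, -, -, hcop₁, -, -, hup₁⟩ := hx₁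
    obtain ⟨hg₂, hh₂, -, -, hcop₂, -, -, hup₂⟩ := hx₂
    simp only at hk hc₁ hc₂ hr₁ hr₂ hup₁ hup₂
    have hdiff : π' ^ n ∣ g₁ * h₂ - g₂ * h₁ := by
      obtain ⟨w₁, e₁⟩ := hr₁
      obtain ⟨w₂, e₂⟩ := hr₂
      obtain ⟨v₁, f₁⟩ := hc₁
      obtain ⟨v₂, f₂⟩ := hc₂
      exact ⟨(w₁ - w₂) * h₁ * h₂ - g₁ * h₂ * v₁ + g₂ * h₁ * v₂, by
        linear_combination (h₁ * h₂) * e₁ - (h₁ * h₂) * e₂ - (g₁ * h₂) * f₁ + (g₂ * h₁) * f₂⟩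
    have h0 : g₁ * h₂ - g₂ * h₁ = 0 := by
      by_contra hne
      have hle := natDegree_le_of_dvd hdiff hne
      rw [hπ'pow n, ← hMdef] at hle
      have hd1 : (g₁ * h₂).natDegree = g₁.natDegree + h₁.natDegree := by
        rw [natDegree_mul hg₁.ne_zero hh₂.ne_zero, hk]
      have hd2 : (g₂ * h₁).natDegree = g₂.natDegree + h₁.natDegree := by
        rw [natDegree_mul hg₂.ne_zero hh₁.ne_zero]
      have hbound : (g₁ * h₂ - g₂ * h₁).natDegree ≤ N := by
        refine le_trans (natDegree_sub_le _ _) (max_le ?_ ?_)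
        · rw [hd1]; omega
        · rw [hd2]; omega
      omega
    have hgeq : g₁ = g₂ := by
      have h12 : g₁ ∣ g₂ := hcop₁.dvd_of_dvd_mul_right ⟨h₂, by linear_combination -h0⟩
      have h21 : g₂ ∣ g₁ := hcop₂.dvd_of_dvd_mul_right ⟨h₁, by linear_combination h0⟩
      exact eq_of_monic_of_associated hg₁ hg₂ (associated_of_dvd_dvd h12 h21)
    have hheq : h₂ = h₁ := by
      apply mul_left_cancel₀ hg₁.ne_zero
      linear_combination h0 - h₁ * hgeq
    exact Subtype.ext (Prod.ext hgeq hheq.symm)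
  haveI : Finite (degreeLT 𝔽q π.natDegree) :=
    Finite.of_equiv _ (degreeLTEquiv 𝔽q π.natDegree).toEquiv.symm
  calc Nat.card S ≤ Nat.card (Fin M × 𝔽qˣ × (degreeLT 𝔽q π.natDegree)) :=
        Nat.card_le_card_of_injective f hinj
  _ = M * ((Fintype.card 𝔽q - 1) * Fintype.card 𝔽q ^ π.natDegree) := by
      rw [Nat.card_prod, Nat.card_prod]
      congr 1
      · simp
      congr 1
      · rw [Nat.card_units, Nat.card_eq_fintype_card]
      · rw [Nat.card_congr (degreeLTEquiv 𝔽q π.natDegree).toEquiv]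
        simp [Nat.card_eq_fintype_card]
  _ = M * (Fintype.card 𝔽q - 1) * Fintype.card 𝔽q ^ π.natDegree := by ring
end
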